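/- One-step discrete energy dissipation for the stabilized semi-implicit scheme: let (X, m) be a finite measure space, V a linear subspace of L²(X, m; ℝ), and a : V × V → ℝ a symmetric bilinear form with a(v, v) ≥ 0 for all v ∈ V. Fix K ≥ 1, L = 3K² − 1, the regularized double-well potential f₀, reals M > 0, τ > 0, ε ∈ ℝ, and β_s ≥ L/2. Suppose c⁰, c¹, μ₁ ∈ V satisfy (i) ∫(c¹ − c⁰)·v dm = −Mτ·a(μ₁, v) for all v ∈ V, and (ii) ∫ μ₁·q dm = β_s∫(c¹ − c⁰)·q dm + ∫ f₀'(c⁰)·q dm + ε²·a(c¹, q) for all q ∈ V. Define the discrete energy E(c) = (ε²/2)·a(c, c) + ∫ f₀(c) dm. Then E(c¹) − E(c⁰) + (ε²/2)·a(c¹ − c⁰, c¹ − c⁰) + Mτ·a(μ₁, μ₁) ≤ 0; in particular E(c¹) ≤ E(c⁰). -/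

import Mathlib

open MeasureTheory

/-- The regularized Landau–Lifshitz double-well potential with cutoff parameter `K`. -/
noncomputable def f0 (K c : ℝ) : ℝ :=
  if K < c then (3*K^2 - 1)/2 * c^2 - 2*K^3*c + (3*K^4 + 1)/4
  else if c < -K then (3*K^2 - 1)/2 * c^2 + 2*K^3*c + (3*K^4 + 1)/4
  else ((c^2 - 1)^2)/4

/-- Its derivative. -/
noncomputable def f0' (K c : ℝ) : ℝ :=
  if K < c then (3*K^2 - 1)*c - 2*K^3
  else if c < -K then (3*K^2 - 1)*c + 2*K^3
  else c^3 - c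

/-- The discrete energy `E(c) = (ε²/2)·a(c,c) + ∫ f₀(c) dm`. -/
noncomputable def discreteEnergy {X : Type*} [MeasurableSpace X] {m : Measure X}
    (K ε : ℝ) {V : Submodule ℝ (Lp ℝ 2 m)} (a : V →ₗ[ℝ] V →ₗ[ℝ] ℝ) (c : V) : ℝ :=
  ε^2/2 * a c c + ∫ x, f0 K ((c : Lp ℝ 2 m) x) ∂m

lemma f0_taylor (K : ℝ) (hK : 1 ≤ K) (a b : ℝ) :
    f0 K b ≤ f0 K a + f0' K a * (b - a) + (3*K^2 - 1)/2 * (b - a)^2 := by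
  have hK0 : (0:ℝ) < K := by linarith
  unfold f0 f0'
  by_cases ha1 : K < a
  · simp only [if_pos ha1]
    by_cases hb1 : K < b
    · simp only [if_pos hb1]; nlinarith [sq_nonneg (b-a)]
    · simp only [if_neg hb1]
      by_cases hb2 : b < -K
      · simp only [if_pos hb2]
        nlinarith [mul_pos (mul_pos hK0 hK0) hK0, sq_nonneg (b-a)]
      · -- PC case: R = -(b-K)^3(b+3K)/4
        simp only [if_neg hb2]
        push_neg at hb1 hb2
        nlinarith [mul_nonneg (mul_nonneg (mul_nonneg (sub_nonneg.2 hb1) (sub_nonneg.2 hb1))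
          (sub_nonneg.2 hb1)) (by linarith : (0:ℝ) ≤ b + 3*K)]
  · by_cases ha2 : a < -K
    · simp only [if_neg ha1, if_pos ha2]
      by_cases hb1 : K < b
      · simp only [if_pos hb1]
        nlinarith [mul_pos (mul_pos hK0 hK0) hK0, sq_nonneg (b-a)]
      · simp only [if_neg hb1]
        by_cases hb2 : b < -K
        · simp only [if_pos hb2]; nlinarith [sq_nonneg (b-a)]
        · -- NC case: R = -(b+K)^3(b-3K)/4
          simp only [if_neg hb2]
          push_neg at hb1 hb2
          nlinarith [mul_nonneg (mul_nonneg (mul_nonneg (sub_nonneg.2 hb2) (sub_nonneg.2 hb2))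
            (sub_nonneg.2 hb2)) (by linarith : (0:ℝ) ≤ 3*K - b)]
    · push_neg at ha1 ha2
      simp only [if_neg (not_lt.2 ha1), if_neg (not_lt.2 ha2)]
      by_cases hb1 : K < b
      · -- CP case
        simp only [if_pos hb1]
        have h1 : 0 ≤ (b - K) * ((a - K)^2 * (a + 2*K)) :=
          mul_nonneg (by linarith) (mul_nonneg (sq_nonneg _) (by linarith))
        have h2 : 0 ≤ (K - a)^2 * ((K - a) * (5*K + 3*a)) :=
          mul_nonneg (sq_nonneg _) (mul_nonneg (by linarith) (by linarith))
        nlinarith [h1, h2]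
      · simp only [if_neg hb1]
        by_cases hb2 : b < -K
        · -- CN case
          simp only [if_pos hb2]
          have h1 : 0 ≤ (-b - K) * ((a + K)^2 * (2*K - a)) :=
            mul_nonneg (by linarith) (mul_nonneg (sq_nonneg _) (by linarith))
          have h2 : 0 ≤ (K + a)^2 * ((K + a) * (5*K - 3*a)) :=
            mul_nonneg (sq_nonneg _) (mul_nonneg (by linarith) (by linarith))
          nlinarith [h1, h2]
        · -- CC case
          simp only [if_neg hb2]
          push_neg at hb1 hb2
          nlinarith [sq_nonneg (b-a), sq_nonneg (a+b),
            mul_nonneg (sub_nonneg.2 hb1) (by linarith : (0:ℝ) ≤ b + K),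
            mul_nonneg (sub_nonneg.2 ha1) (by linarith : (0:ℝ) ≤ a + K),
            sq_nonneg ((b-a)*(a+b))]

lemma f0_measurable (K : ℝ) : Measurable (f0 K) := by
  unfold f0
  exact Measurable.ite (measurableSet_lt measurable_const measurable_id)
    (by fun_prop) (Measurable.ite (measurableSet_lt measurable_id measurable_const)
      (by fun_prop) (by fun_prop))

lemma f0'_measurable (K : ℝ) : Measurable (f0' K) := by
  unfold f0'
  exact Measurable.ite (measurableSet_lt measurable_const measurable_id)
    (by fun_prop) (Measurable.ite (measurableSet_lt measurable_id measurable_const)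
      (by fun_prop) (by fun_prop))

lemma f0_nonneg (K : ℝ) (hK : 1 ≤ K) (c : ℝ) : 0 ≤ f0 K c := by
  have hK3 : (0:ℝ) ≤ K^3 - K := by
    have h := mul_nonneg (mul_nonneg (by linarith : (0:ℝ) ≤ K) (by linarith : (0:ℝ) ≤ K - 1)) (by linarith : (0:ℝ) ≤ K + 1)
    nlinarith [h]
  unfold f0
  split_ifs with h1 h2
  · nlinarith [sq_nonneg (c - K), sq_nonneg (K^2 - 1),
      mul_nonneg hK3 (by linarith : (0:ℝ) ≤ c - K)]
  · nlinarith [sq_nonneg (c + K), sq_nonneg (K^2 - 1),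
      mul_nonneg hK3 (by linarith : (0:ℝ) ≤ -c - K)]
  · positivity

lemma f0_le (K : ℝ) (hK : 1 ≤ K) (c : ℝ) : f0 K c ≤ 1/4 + (3*K^2 - 1)/2 * c^2 := by
  have hK0 : (0:ℝ) < K := by linarith
  unfold f0
  split_ifs with h1 h2
  · nlinarith [mul_pos (mul_pos (mul_pos hK0 hK0) hK0) (by linarith : (0:ℝ) < c),
      sq_nonneg (K^2 - 1), sq_nonneg K]
  · nlinarith [mul_pos (mul_pos (mul_pos hK0 hK0) hK0) (by linarith : (0:ℝ) < -c),
      sq_nonneg (K^2 - 1), sq_nonneg K]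
  · push_neg at h1 h2
    nlinarith [mul_nonneg (sq_nonneg c) (by nlinarith : (0:ℝ) ≤ K^2 - c^2), sq_nonneg c,
      sq_nonneg (K*c)]

lemma abs_f0'_le (K : ℝ) (hK : 1 ≤ K) (c : ℝ) :
    |f0' K c| ≤ |(3*K^2 - 1) * c| := by
  have hK0 : (0:ℝ) < K := by linarith
  have hL : (0:ℝ) < 3*K^2 - 1 := by nlinarith
  rw [abs_le]
  unfold f0'
  split_ifs with ha hb
  · rw [abs_of_pos (by nlinarith : (0:ℝ) < (3*K^2-1)*c)]
    constructor <;> nlinarith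
  · rw [abs_of_neg (by nlinarith : (3*K^2-1)*c < 0)]
    constructor <;> nlinarith
  · push_neg at ha hb
    rcases le_or_gt 0 c with hc | hc
    · rw [abs_of_nonneg (by positivity)]
      refine ⟨by nlinarith [pow_nonneg hc 3, mul_nonneg (by nlinarith : (0:ℝ) ≤ 3*K^2 - 2) hc], ?_⟩
      nlinarith [mul_nonneg hc (by nlinarith : (0:ℝ) ≤ K^2 - c^2),
        mul_nonneg (by nlinarith : (0:ℝ) ≤ 2*K^2 - 1) hc]
    · rw [abs_of_neg (by nlinarith : (3*K^2-1)*c < 0)]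
      have hc' : (0:ℝ) ≤ -c := by linarith
      constructor
      · nlinarith [mul_nonneg hc' (by nlinarith : (0:ℝ) ≤ K^2 - c^2),
          mul_nonneg (by nlinarith : (0:ℝ) ≤ 2*K^2 - 1) hc']
      · nlinarith [pow_nonneg hc' 3, mul_nonneg (by nlinarith : (0:ℝ) ≤ 3*K^2 - 2) hc']

lemma integrable_mul_of_memL2 {X : Type*} [MeasurableSpace X] {m : Measure X}
    {f g : X → ℝ} (hf : MemLp f 2 m) (hg : MemLp g 2 m) :
    Integrable (fun x => f x * g x) m := by
  have hpqr : (1 : ENNReal) / 1 = 1 / 2 + 1 / 2 := by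
    have h11 : (1 : ENNReal) / 1 = 1 := by simp
    rw [h11]; exact (ENNReal.add_halves 1).symm
  have h : MemLp (f • g) 1 m := hg.smul hf (hpqr := ⟨by rw [inv_one]; exact ENNReal.inv_two_add_inv_two⟩)
  exact memLp_one_iff_integrable.mp h

set_option maxHeartbeats 1000000 in
/-- One-step discrete energy dissipation for the stabilized semi-implicit scheme. -/
theorem one_step_energy_dissipation
    {X : Type*} [MeasurableSpace X] (m : Measure X) [IsFiniteMeasure m]
    (K : ℝ) (hK : 1 ≤ K)
    (V : Submodule ℝ (Lp ℝ 2 m)) (a : V →ₗ[ℝ] V →ₗ[ℝ] ℝ)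
    (ha_symm : ∀ u w : V, a u w = a w u)
    (ha_nonneg : ∀ v : V, 0 ≤ a v v)
    (M τ ε βs : ℝ) (hM : 0 < M) (hτ : 0 < τ) (hβ : (3*K^2 - 1)/2 ≤ βs)
    (c0 c1 μ1 : V)
    (h1 : ∀ v : V, ∫ x, ((c1 : Lp ℝ 2 m) x - (c0 : Lp ℝ 2 m) x) * (v : Lp ℝ 2 m) x ∂m
        = -(M * τ) * a μ1 v)
    (h2 : ∀ q : V, ∫ x, (μ1 : Lp ℝ 2 m) x * (q : Lp ℝ 2 m) x ∂m
        = βs * ∫ x, ((c1 : Lp ℝ 2 m) x - (c0 : Lp ℝ 2 m) x) * (q : Lp ℝ 2 m) x ∂m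
          + ∫ x, f0' K ((c0 : Lp ℝ 2 m) x) * (q : Lp ℝ 2 m) x ∂m
          + ε^2 * a c1 q) :
    discreteEnergy K ε a c1 - discreteEnergy K ε a c0
        + ε^2/2 * a (c1 - c0) (c1 - c0) + M * τ * a μ1 μ1 ≤ 0
      ∧ discreteEnergy K ε a c1 ≤ discreteEnergy K ε a c0 := by
  classical
  set g0 : Lp ℝ 2 m := (c0 : Lp ℝ 2 m) with hg0
  set g1 : Lp ℝ 2 m := (c1 : Lp ℝ 2 m) with hg1
  set gμ : Lp ℝ 2 m := (μ1 : Lp ℝ 2 m) with hgμ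
  have hm0 : MemLp (fun x => g0 x) 2 m := Lp.memLp g0
  have hm1 : MemLp (fun x => g1 x) 2 m := Lp.memLp g1
  have hmδ : MemLp (fun x => g1 x - g0 x) 2 m := hm1.sub hm0
  -- integrability of f0 ∘ c
  have hIf0 : ∀ g : Lp ℝ 2 m, Integrable (fun x => f0 K (g x)) m := by
    intro g
    have hg2 : Integrable (fun x => (3*K^2-1)/2 * (g x * g x)) m :=
      (integrable_mul_of_memL2 (Lp.memLp g) (Lp.memLp g)).const_mul _
    refine Integrable.mono' ((integrable_const (1/4 : ℝ)).add hg2)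
      ((f0_measurable K).comp (Lp.stronglyMeasurable g).measurable).aestronglyMeasurable ?_
    filter_upwards with x
    rw [Real.norm_eq_abs, abs_of_nonneg (f0_nonneg K hK _)]
    have := f0_le K hK (g x)
    simp only [Pi.add_apply]
    nlinarith [this]
  -- integrability of (c1-c0)^2
  have hIδ2 : Integrable (fun x => (g1 x - g0 x)^2) m := by
    have := integrable_mul_of_memL2 hmδ hmδ
    simpa [pow_two] using this
  -- f0'(c0) in L2
  have hmf' : MemLp (fun x => f0' K (g0 x)) 2 m := by
    refine MemLp.of_le (hm0.const_mul (3*K^2-1)) ((f0'_measurable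
      K).comp (Lp.stronglyMeasurable g0).measurable).aestronglyMeasurable ?_
    filter_upwards with x
    rw [Real.norm_eq_abs, Real.norm_eq_abs]
    exact abs_f0'_le K hK _
  have hIf'δ : Integrable (fun x => f0' K (g0 x) * (g1 x - g0 x)) m :=
    integrable_mul_of_memL2 hmf' hmδ
  -- Taylor inequality integrated
  have hTaylor : ∫ x, f0 K (g1 x) ∂m ≤ ∫ x, f0 K (g0 x) ∂m
      + ∫ x, f0' K (g0 x) * (g1 x - g0 x) ∂m
      + (3*K^2-1)/2 * ∫ x, (g1 x - g0 x)^2 ∂m := by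
    have hmono : ∫ x, f0 K (g1 x) ∂m ≤ ∫ x, (f0 K (g0 x)
        + f0' K (g0 x) * (g1 x - g0 x) + (3*K^2-1)/2 * (g1 x - g0 x)^2) ∂m := by
      refine integral_mono (hIf0 g1) (((hIf0 g0).add hIf'δ).add (hIδ2.const_mul _)) ?_
      intro x
      exact f0_taylor K hK (g0 x) (g1 x)
    have hAB : Integrable (fun x => f0 K ((g0 : Lp ℝ 2 m) x)
        + f0' K ((g0 : Lp ℝ 2 m) x) * ((g1 : Lp ℝ 2 m) x - (g0 : Lp ℝ 2 m) x)) m :=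
      (hIf0 g0).add hIf'δ
    have hC : Integrable (fun x => (3*K^2-1)/2 * ((g1 : Lp ℝ 2 m) x - (g0 : Lp ℝ 2 m) x)^2) m :=
      hIδ2.const_mul _
    rw [integral_add hAB hC, integral_add (hIf0 g0) hIf'δ, integral_const_mul] at hmono
    linarith
  -- coe of c1 - c0
  have hsub_ae : ((c1 - c0 : V) : Lp ℝ 2 m) =ᵐ[m] fun x => g1 x - g0 x := by
    have hc : ((c1 - c0 : V) : Lp ℝ 2 m) = g1 - g0 := rfl
    rw [hc]; exact Lp.coeFn_sub g1 g0
  -- rewrite h2 at q = c1 - c0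
  have hkey : ∀ F : X → ℝ, (∫ x, F x * ((c1 - c0 : V) : Lp ℝ 2 m) x ∂m)
      = ∫ x, F x * (g1 x - g0 x) ∂m := by
    intro F
    refine integral_congr_ae (hsub_ae.mono fun x hx => ?_)
    dsimp only at hx ⊢
    rw [hx]
  have h2' := h2 (c1 - c0)
  rw [hkey, hkey, hkey] at h2'
  -- rewrite h1 at v = μ1
  have h1' := h1 μ1
  have hμδ : (∫ x, gμ x * (g1 x - g0 x) ∂m) = -(M * τ) * a μ1 μ1 := by
    rw [← h1']
    refine integral_congr_ae (Filter.Eventually.of_forall fun x => mul_comm _ _)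
  rw [hμδ] at h2'
  -- δ² integral equality and nonnegativity
  have hδδ : (∫ x, (g1 x - g0 x) * (g1 x - g0 x) ∂m) = ∫ x, (g1 x - g0 x)^2 ∂m := by
    refine integral_congr_ae (Filter.Eventually.of_forall fun x => ?_)
    dsimp only
    rw [pow_two]
  rw [hδδ] at h2'
  have hIδδ_nonneg : 0 ≤ ∫ x, (g1 x - g0 x)^2 ∂m :=
    integral_nonneg fun x => sq_nonneg _
  -- bilinear expansions
  have e1 : a (c1 - c0) (c1 - c0) = a c1 c1 - 2 * a c1 c0 + a c0 c0 := by
    simp only [map_sub, LinearMap.sub_apply]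
    rw [ha_symm c0 c1]; ring
  have e2 : a c1 (c1 - c0) = a c1 c1 - a c1 c0 := by
    simp only [map_sub]
  rw [e2] at h2'
  -- main computation
  have hprod : 0 ≤ (βs - (3*K^2 - 1)/2) * ∫ x, (g1 x - g0 x)^2 ∂m :=
    mul_nonneg (by linarith) hIδδ_nonneg
  have hmain : discreteEnergy K ε a c1 - discreteEnergy K ε a c0
      + ε^2/2 * a (c1 - c0) (c1 - c0) + M * τ * a μ1 μ1 ≤ 0 := by
    simp only [discreteEnergy, e1, ← hg0, ← hg1]
    nlinarith [hTaylor, h2', hprod]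
  refine ⟨hmain, ?_⟩
  have h3 : 0 ≤ ε^2/2 * a (c1 - c0) (c1 - c0) :=
    mul_nonneg (by positivity) (ha_nonneg _)
  have h4 : 0 ≤ M * τ * a μ1 μ1 :=
    mul_nonneg (by positivity) (ha_nonneg _)
  linarith
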